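/- arXiv:1205.0616 — 2 statements merged into one kernel-verified Lean document; each statement's English description precedes it below -/
import Mathlib

section
/- Under condition (C1) (∑ a_k = 1, a_k ≥ 0), there exist constants C > 0 and n_0 such that for all integers n ≥ n_0, the integral ∫_{-∞}^{∞} dy / |G_n(1+iy)|^2 ≤ C, where G_n(z) = z + n^2 ∑_k a_k/(z + b_k). -/
open Complex MeasureTheory


noncomputable def Sf (a b : ℕ → ℝ) (u : ℝ) : ℝ := ∑' k, a k / ((1 + b k)^2 + u)

lemma den_ge {b : ℕ → ℝ} (hbk : ∀ k, 0 ≤ b k) (k : ℕ) {u : ℝ} (hu : 0 ≤ u) :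
    1 ≤ (1 + b k)^2 + u := by nlinarith [hbk k]

lemma Ssum {a b : ℕ → ℝ} (ha : ∀ k, 0 ≤ a k) (hbk : ∀ k, 0 ≤ b k) (hsum : Summable a)
    {u : ℝ} (hu : 0 ≤ u) : Summable (fun k => a k / ((1 + b k)^2 + u)) := by
  apply Summable.of_nonneg_of_le (fun k => ?_) (fun k => ?_) hsum
  · have h := den_ge hbk k hu
    exact div_nonneg (ha k) (by linarith)
  have h := den_ge hbk k hu
  calc a k / ((1 + b k)^2 + u) ≤ a k / 1 := div_le_div_of_nonneg_left (ha k) one_pos h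
    _ = a k := div_one _

lemma Sf_nonneg {a b : ℕ → ℝ} (ha : ∀ k, 0 ≤ a k) (hbk : ∀ k, 0 ≤ b k)
    {u : ℝ} (hu : 0 ≤ u) : 0 ≤ Sf a b u := by
  apply tsum_nonneg
  intro k
  have h := den_ge hbk k hu
  exact div_nonneg (ha k) (by linarith)

lemma Sf_single {a b : ℕ → ℝ} (ha : ∀ k, 0 ≤ a k) (hbk : ∀ k, 0 ≤ b k) (hsum : Summable a)
    (k0 : ℕ) {u : ℝ} (hu : 0 ≤ u) : a k0 / ((1 + b k0)^2 + u) ≤ Sf a b u := by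
  apply Summable.le_tsum (Ssum ha hbk hsum hu) k0
  intro j _
  have h := den_ge hbk j hu
  exact div_nonneg (ha j) (by linarith)

lemma Sf_le {a b : ℕ → ℝ} (ha : ∀ k, 0 ≤ a k) (hbk : ∀ k, 0 ≤ b k) (hsum : Summable a)
    (h1 : ∑' k, a k = 1) {u : ℝ} (hu : 0 ≤ u) : Sf a b u ≤ 1 / (1 + u) := by
  have hden : (0:ℝ) < 1 + u := by linarith
  have : Sf a b u ≤ ∑' k, a k / (1 + u) := by
    apply Summable.tsum_le_tsum (fun k => ?_) (Ssum ha hbk hsum hu) (hsum.div_const _)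
    exact div_le_div_of_nonneg_left (ha k) hden (by nlinarith [hbk k])
  rwa [tsum_div_const, h1] at this

lemma Sf_diff {a b : ℕ → ℝ} (ha : ∀ k, 0 ≤ a k) (hbk : ∀ k, 0 ≤ b k) (hsum : Summable a)
    (k0 : ℕ) {u u' : ℝ} (hu : 0 ≤ u) (huu : u ≤ u') :
    a k0 * (u' - u) / (((1 + b k0)^2 + u) * ((1 + b k0)^2 + u')) ≤ Sf a b u - Sf a b u' := by
  have hu' : 0 ≤ u' := le_trans hu huu
  have h1 := Ssum ha hbk hsum hu
  have h2 := Ssum ha hbk hsum hu'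
  have hterm : ∀ k, a k / ((1 + b k)^2 + u) - a k / ((1 + b k)^2 + u')
      = a k * (u' - u) / (((1 + b k)^2 + u) * ((1 + b k)^2 + u')) := by
    intro k
    have d1 : (1 + b k)^2 + u ≠ 0 := by have := den_ge hbk k hu; linarith
    have d2 : (1 + b k)^2 + u' ≠ 0 := by have := den_ge hbk k hu'; linarith
    field_simp
    ring
  rw [Sf, Sf, ← Summable.tsum_sub h1 h2]
  refine le_trans (le_of_eq (hterm k0).symm) (Summable.le_tsum (h1.sub h2) k0 (fun j _ => ?_))
  have e1 := den_ge hbk j hu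
  have e2 := den_ge hbk j hu'
  have : a j / ((1 + b j)^2 + u') ≤ a j / ((1 + b j)^2 + u) :=
    div_le_div_of_nonneg_left (ha j) (by linarith) (by linarith)
  linarith

lemma Sf_cont {a b : ℕ → ℝ} (ha : ∀ k, 0 ≤ a k) (hbk : ∀ k, 0 ≤ b k) (hsum : Summable a) :
    Continuous fun y : ℝ => Sf a b (y^2) := by
  show Continuous fun y : ℝ => ∑' k, a k / ((1 + b k)^2 + y^2)
  apply continuous_tsum (u := a) (fun k => ?_) hsum (fun k y => ?_)
  · apply Continuous.div continuous_const (by continuity)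
    intro y
    have := den_ge hbk k (sq_nonneg y)
    linarith
  · have h := den_ge hbk k (sq_nonneg y)
    have h0 : 0 ≤ a k / ((1 + b k)^2 + y^2) := div_nonneg (ha k) (by linarith)
    rw [Real.norm_eq_abs, _root_.abs_of_nonneg h0]
    calc a k / ((1 + b k)^2 + y^2) ≤ a k / 1 := div_le_div_of_nonneg_left (ha k) one_pos h
      _ = a k := div_one _


-- pure arithmetic key lemmas
lemma key_inner {N2 St Sy A D γ y0 t : ℝ} (hA : 0 < A) (hγ : 0 < γ) (hy0 : 0 < y0)
    (hN2 : 0 ≤ N2) (hD : 0 < D)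
    (h5 : A * (y0^2 - t^2) ≤ (St - Sy) * D^2)
    (hFy : N2 * Sy = 1)
    (hγm : 2 * γ * D^2 ≤ N2 * A * y0^2)
    (ht : 0 ≤ t) (hc1 : t ≤ y0/2) :
    (γ * t)^2 ≤ (t * (1 - N2 * St))^2 := by
  have hD2pos : (0:ℝ) < D^2 := by positivity
  have hq : (3/4) * y0^2 ≤ y0^2 - t^2 := by nlinarith
  have hE : γ ≤ N2 * St - 1 := by
    have h6 : N2 * (A * (y0^2 - t^2)) ≤ N2 * ((St - Sy) * D^2) :=
      mul_le_mul_of_nonneg_left h5 hN2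
    have hd2 : N2 * (A * ((3/4) * y0^2)) ≤ N2 * (A * (y0^2 - t^2)) := by
      apply mul_le_mul_of_nonneg_left _ hN2
      exact mul_le_mul_of_nonneg_left hq (le_of_lt hA)
    have hFD : N2 * Sy * D^2 = D^2 := by rw [hFy, one_mul]
    have hgoal2 : γ * D^2 ≤ (N2 * St - 1) * D^2 := by nlinarith [hγ.le, hD2pos.le]
    exact le_of_mul_le_mul_right hgoal2 hD2pos
  nlinarith [mul_le_mul_of_nonneg_left (mul_self_le_mul_self (le_of_lt hγ) hE) (sq_nonneg t)]

lemma key_middle {N2 St Sy A D γ y0 t : ℝ} (hA : 0 < A) (hγ : 0 < γ) (hy0 : 0 < y0)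
    (hN2 : 0 ≤ N2) (hD : 0 < D)
    (h5 : A * (y0^2 - t^2) ≤ (St - Sy) * D^2)
    (hFy : N2 * Sy = 1)
    (hγm : 2 * γ * D^2 ≤ N2 * A * y0^2)
    (hc1 : y0/2 < t) (hc2 : t ≤ y0) :
    (γ * (t - y0))^2 ≤ (t * (1 - N2 * St))^2 := by
  have ht : 0 ≤ t := by linarith
  have hD2pos : (0:ℝ) < D^2 := by positivity
  have hkey : γ * (y0 - t) ≤ t * (N2 * St - 1) := by
    have ht2 : y0^2 / 2 ≤ t * (y0 + t) := by nlinarith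
    have h6 : N2 * (A * (y0^2 - t^2)) ≤ N2 * ((St - Sy) * D^2) :=
      mul_le_mul_of_nonneg_left h5 hN2
    have hFD : N2 * Sy * D^2 = D^2 := by rw [hFy, one_mul]
    have hEt : N2 * A * (y0^2 - t^2) ≤ (N2 * St - 1) * D^2 := by nlinarith
    have hEt2 : t * (N2 * A * (y0^2 - t^2)) ≤ t * ((N2 * St - 1) * D^2) :=
      mul_le_mul_of_nonneg_left hEt ht
    have h8 : (y0^2/2) * (y0 - t) ≤ (t * (y0 + t)) * (y0 - t) :=
      mul_le_mul_of_nonneg_right ht2 (by linarith)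
    have hN2A : 0 ≤ N2 * A := mul_nonneg hN2 (le_of_lt hA)
    have hlb : (y0 - t) * (N2 * A * (y0^2/2)) ≤ t * (N2 * A * (y0^2 - t^2)) := by
      nlinarith [mul_le_mul_of_nonneg_left h8 hN2A]
    have hgb : γ * (y0 - t) * D^2 ≤ (y0 - t) * (N2 * A * (y0^2/2)) := by
      nlinarith [mul_le_mul_of_nonneg_right hγm (by linarith : (0:ℝ) ≤ y0 - t)]
    have hfin : γ * (y0 - t) * D^2 ≤ t * (N2 * St - 1) * D^2 := by nlinarith
    exact le_of_mul_le_mul_right (by nlinarith [hfin]) hD2pos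
  have h0 : 0 ≤ γ * (y0 - t) := mul_nonneg (le_of_lt hγ) (by linarith)
  nlinarith [mul_self_le_mul_self h0 hkey]

lemma key_outer {N2 St Sy A D Dt γ y0 t : ℝ} (hA : 0 < A) (hγ : 0 < γ) (hy0 : 0 < y0)
    (hN2 : 0 ≤ N2) (hD : 0 < D) (hDtpos : 0 < Dt)
    (hdiff : A * (t^2 - y0^2) ≤ (Sy - St) * (D * Dt))
    (hDt : Dt * y0^2 ≤ D * t^2)
    (hFy : N2 * Sy = 1)
    (hγm : 2 * γ * D^2 ≤ N2 * A * y0^2)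
    (hc2 : y0 < t) :
    (γ * (t - y0))^2 ≤ (t * (1 - N2 * St))^2 := by
  have htpos : 0 < t := lt_trans hy0 hc2
  have hu0pos : (0:ℝ) < y0^2 := by positivity
  have hkey : γ * (t - y0) ≤ t * (1 - N2 * St) := by
    have hposall : (0:ℝ) < D * Dt * y0^2 := by positivity
    have hst1 : (t * (N2 * y0^2)) * (A * (t^2 - y0^2)) ≤
        (t * (N2 * y0^2)) * ((Sy - St) * (D * Dt)) := by
      apply mul_le_mul_of_nonneg_left hdiff
      positivity
    have hst2 : γ * (t - y0) * (D * (Dt * y0^2)) ≤ γ * (t - y0) * (D * (D * t^2)) := by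
      apply mul_le_mul_of_nonneg_left _
        (mul_nonneg (le_of_lt hγ) (by linarith : (0:ℝ) ≤ t - y0))
      exact mul_le_mul_of_nonneg_left hDt (le_of_lt hD)
    have hst3 : γ * (t - y0) * (D * (D * t^2)) ≤ (t * (N2 * y0^2)) * (A * (t^2 - y0^2)) := by
      have e3 : (t - y0) * t^2 ≤ (t - y0) * ((t + y0) * t) := by nlinarith [mul_nonneg (mul_nonneg (by linarith : (0:ℝ) ≤ t - y0) hy0.le) htpos.le]
      have e4 : (0:ℝ) ≤ (t - y0) * t^2 := by nlinarith
      have e6 : (0:ℝ) ≤ γ * D^2 := by positivity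
      have e7 : (0:ℝ) ≤ N2 * A * y0^2 := by positivity
      nlinarith [mul_le_mul_of_nonneg_right hγm e4, mul_le_mul_of_nonneg_left e3 e7,
        mul_nonneg e6 e4]
    have hcomb : γ * (t - y0) * (D * Dt * y0^2) ≤
        (t * (N2 * (Sy - St))) * (D * Dt * y0^2) := by nlinarith
    have hdiv := le_of_mul_le_mul_right hcomb hposall
    nlinarith [hdiv, hFy]
  have h0 : 0 ≤ γ * (t - y0) := mul_nonneg (le_of_lt hγ) (by linarith)
  nlinarith [mul_self_le_mul_self h0 hkey]

lemma Gabs_sq {a b : ℕ → ℝ} (ha : ∀ k, 0 ≤ a k) (hbk : ∀ k, 0 ≤ b k) (hsum : Summable a)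
    (n : ℕ) (y : ℝ) :
    1 + (y * (1 - (n:ℝ)^2 * Sf a b (y^2)))^2
      ≤ ‖(1 + y * I) + (n : ℂ)^2 * ∑' k, (a k : ℂ) / ((1 + y * I) + (b k : ℂ))‖^2 := by
  have hwre : ∀ k, ((1:ℂ) + y * I + (b k : ℂ)).re = 1 + b k := by intro k; simp
  have hwim : ∀ k, ((1:ℂ) + y * I + (b k : ℂ)).im = y := by intro k; simp
  have hns : ∀ k, Complex.normSq ((1:ℂ) + y * I + (b k : ℂ)) = (1 + b k)^2 + y^2 := by
    intro k; rw [Complex.normSq_apply, hwre, hwim]; ring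
  have hden : ∀ k, (1:ℝ) ≤ (1 + b k)^2 + y^2 := fun k => den_ge hbk k (sq_nonneg y)
  have habs1 : ∀ k, 1 ≤ ‖(1:ℂ) + y * I + (b k : ℂ)‖ := by
    intro k
    have h1 : (1:ℝ) + b k ≤ ‖(1:ℂ) + y * I + (b k : ℂ)‖ := by
      rw [← hwre k]; exact Complex.re_le_norm _
    have := hbk k; linarith
  have hsumc : Summable fun k => (a k : ℂ) / ((1:ℂ) + y * I + (b k : ℂ)) := by
    apply hsum.of_norm_bounded (fun k => ?_)
    rw [norm_div, Complex.norm_real, Real.norm_eq_abs, _root_.abs_of_nonneg (ha k)]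
    calc a k / ‖(1:ℂ) + y * I + (b k : ℂ)‖ ≤ a k / 1 :=
        div_le_div_of_nonneg_left (ha k) one_pos (habs1 k)
      _ = a k := div_one _
  have hre : ∀ k, ((a k : ℂ) / ((1:ℂ) + y * I + (b k : ℂ))).re
      = a k * (1 + b k) / ((1 + b k)^2 + y^2) := by
    intro k
    rw [Complex.div_re, hns, hwre, hwim]
    simp
  have him : ∀ k, ((a k : ℂ) / ((1:ℂ) + y * I + (b k : ℂ))).im
      = -(y * (a k / ((1 + b k)^2 + y^2))) := by
    intro k
    rw [Complex.div_im, hns, hwre, hwim]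
    simp
    ring
  set T := ∑' k, (a k : ℂ) / ((1:ℂ) + y * I + (b k : ℂ)) with hT
  have hTre : 0 ≤ T.re := by
    rw [hT, Complex.re_tsum hsumc]
    apply tsum_nonneg
    intro k
    rw [hre k]
    have := hden k
    have := hbk k
    apply div_nonneg (by nlinarith [ha k]) (by linarith)
  have hTim : T.im = -(y * Sf a b (y^2)) := by
    rw [hT, Complex.im_tsum hsumc]
    calc ∑' k, ((a k : ℂ) / ((1:ℂ) + y * I + (b k : ℂ))).im
        = ∑' k, (-y) * (a k / ((1 + b k)^2 + y^2)) := by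
          apply tsum_congr; intro k; rw [him k]; ring
      _ = (-y) * Sf a b (y^2) := tsum_mul_left
      _ = -(y * Sf a b (y^2)) := by ring
  have hn2 : ((n:ℂ))^2 = (((n:ℝ)^2 : ℝ) : ℂ) := by push_cast; ring
  set G := (1 + (y:ℂ) * I) + (n : ℂ)^2 * T with hG
  have hGre : G.re = 1 + (n:ℝ)^2 * T.re := by
    rw [hG, hn2, Complex.add_re, Complex.re_ofReal_mul]
    simp
  have hGim : G.im = y + (n:ℝ)^2 * T.im := by
    rw [hG, hn2, Complex.add_im, Complex.im_ofReal_mul]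
    simp
  have hsq : ‖G‖^2 = G.re^2 + G.im^2 := by
    rw [Complex.sq_norm, Complex.normSq_apply]; ring
  have hGoal : ‖(1 + y * I) + (n : ℂ)^2
      * ∑' k, (a k : ℂ) / ((1 + y * I) + (b k : ℂ))‖^2 = G.re^2 + G.im^2 := by
    rw [← hsq, hG, hT]
  rw [hGoal, hGim, hTim]
  have h1 : 1 ≤ G.re := by rw [hGre]; nlinarith [hTre]
  have h2 : y + (n:ℝ)^2 * -(y * Sf a b (y^2)) = y * (1 - (n:ℝ)^2 * Sf a b (y^2)) := by ring
  rw [h2]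
  nlinarith [h1]

lemma cauchyKernel_integrable {γ : ℝ} (hγ : 0 < γ) (s : ℝ) :
    Integrable (fun y : ℝ => (1 + (γ * (y - s))^2)⁻¹) := by
  have h1 : Integrable (fun x : ℝ => (1 + (γ * x)^2)⁻¹) := by
    have := (integrable_comp_smul_iff (volume : Measure ℝ)
      (fun x : ℝ => (1 + x^2)⁻¹) (ne_of_gt hγ)).2 integrable_inv_one_add_sq
    simpa [smul_eq_mul] using this
  simpa using h1.comp_sub_right s

lemma cauchyKernel_integral {γ : ℝ} (hγ : 0 < γ) (s : ℝ) :
    ∫ y : ℝ, (1 + (γ * (y - s))^2)⁻¹ = Real.pi / γ := by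
  have h0 : (∫ y : ℝ, (1 + (γ * y)^2)⁻¹) = Real.pi / γ := by
    have := MeasureTheory.Measure.integral_comp_mul_left (fun x : ℝ => (1 + x^2)⁻¹) γ
    rw [integral_univ_inv_one_add_sq] at this
    rw [this, abs_of_pos (inv_pos.2 hγ), smul_eq_mul]
    field_simp
  calc ∫ y : ℝ, (1 + (γ * (y - s))^2)⁻¹
      = ∫ y : ℝ, (1 + (γ * y)^2)⁻¹ :=
        integral_sub_right_eq_self (fun y : ℝ => (1 + (γ * y)^2)⁻¹) s
    _ = Real.pi / γ := h0


lemma Sf_low {a b : ℕ → ℝ} (ha : ∀ k, 0 ≤ a k) (hbk : ∀ k, 0 ≤ b k) (hsum : Summable a)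
    (k0 : ℕ) (hk0 : 0 < a k0) {u u0 : ℝ} (hu : 0 ≤ u) (huu : u ≤ u0) :
    a k0 * (u0 - u) ≤ (Sf a b u - Sf a b u0) * (((1 + b k0)^2 + u0)^2) := by
  have hdiff := Sf_diff ha hbk hsum k0 hu huu
  have hu0 : 0 ≤ u0 := le_trans hu huu
  have hd1 : (0:ℝ) < (1 + b k0)^2 + u := by linarith [den_ge hbk k0 hu]
  have hd0 : (0:ℝ) < (1 + b k0)^2 + u0 := by linarith [den_ge hbk k0 hu0]
  have hprod : (0:ℝ) < ((1 + b k0)^2 + u) * ((1 + b k0)^2 + u0) := mul_pos hd1 hd0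
  rw [div_le_iff₀ hprod] at hdiff
  have hSd : 0 ≤ Sf a b u - Sf a b u0 := by nlinarith [hk0]
  have hden2 : ((1 + b k0)^2 + u) * ((1 + b k0)^2 + u0) ≤ ((1 + b k0)^2 + u0)^2 := by
    nlinarith
  nlinarith [mul_le_mul_of_nonneg_left hden2 hSd]

lemma claim_t {a b : ℕ → ℝ} (ha : ∀ k, 0 ≤ a k) (hbk : ∀ k, 0 ≤ b k) (hsum : Summable a)
    {k0 : ℕ} (hk0 : 0 < a k0) {n : ℕ} {y0 γ : ℝ}
    (hy0pos : 0 < y0) (hγ : 0 < γ)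
    (hFy0 : (n:ℝ)^2 * Sf a b (y0^2) = 1)
    (hγm : 2 * γ * (((1 + b k0)^2 + y0^2)^2) ≤ (n:ℝ)^2 * a k0 * y0^2)
    {t : ℝ} (ht : 0 ≤ t) :
    (1 + (t * (1 - (n:ℝ)^2 * Sf a b (t^2)))^2)⁻¹ ≤
      (1 + (γ * (t - y0))^2)⁻¹ + (1 + (γ * t)^2)⁻¹ := by
  have hD0pos : (0:ℝ) < (1 + b k0)^2 + y0^2 := by linarith [den_ge hbk k0 (sq_nonneg y0)]
  have hN2 : (0:ℝ) ≤ (n:ℝ)^2 := sq_nonneg _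
  rcases le_or_gt t (y0/2) with hc1 | hc1
  · have huu : t^2 ≤ y0^2 := by nlinarith
    have h5 := Sf_low ha hbk hsum k0 hk0 (sq_nonneg t) huu
    have hsq2 := key_inner hk0 hγ hy0pos hN2 hD0pos h5 hFy0 hγm ht hc1
    have hle1 : (1 + (t * (1 - (n:ℝ)^2 * Sf a b (t^2)))^2)⁻¹ ≤ (1 + (γ * t)^2)⁻¹ :=
      inv_anti₀ (by positivity) (by linarith)
    have hnn : (0:ℝ) ≤ (1 + (γ * (t - y0))^2)⁻¹ := by positivity
    linarith
  rcases le_or_gt t y0 with hc2 | hc2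
  · have huu : t^2 ≤ y0^2 := by nlinarith
    have h5 := Sf_low ha hbk hsum k0 hk0 (sq_nonneg t) huu
    have hsq2 := key_middle hk0 hγ hy0pos hN2 hD0pos h5 hFy0 hγm hc1 hc2
    have hle1 : (1 + (t * (1 - (n:ℝ)^2 * Sf a b (t^2)))^2)⁻¹ ≤ (1 + (γ * (t - y0))^2)⁻¹ :=
      inv_anti₀ (by positivity) (by linarith)
    have hnn : (0:ℝ) ≤ (1 + (γ * t)^2)⁻¹ := by positivity
    linarith
  · have huu : y0^2 ≤ t^2 := by nlinarith
    have hDtpos : (0:ℝ) < (1 + b k0)^2 + t^2 := by linarith [den_ge hbk k0 (sq_nonneg t)]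
    have hdiff := Sf_diff ha hbk hsum k0 (sq_nonneg y0) huu
    rw [div_le_iff₀ (mul_pos hD0pos hDtpos)] at hdiff
    have hDt : ((1 + b k0)^2 + t^2) * y0^2 ≤ ((1 + b k0)^2 + y0^2) * t^2 := by
      nlinarith [mul_le_mul_of_nonneg_left huu (sq_nonneg (1 + b k0))]
    have hsq2 := key_outer hk0 hγ hy0pos hN2 hD0pos hDtpos hdiff hDt hFy0 hγm hc2
    have hle1 : (1 + (t * (1 - (n:ℝ)^2 * Sf a b (t^2)))^2)⁻¹ ≤ (1 + (γ * (t - y0))^2)⁻¹ :=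
      inv_anti₀ (by positivity) (by linarith)
    have hnn : (0:ℝ) ≤ (1 + (γ * t)^2)⁻¹ := by positivity
    linarith

set_option maxHeartbeats 4000000 in
theorem inv_Gn_L2_bound (a b : ℕ → ℝ) (ha : ∀ k, 0 ≤ a k) (hb0 : 0 ≤ b 0)
    (hb : StrictMono b) (hsum : Summable a) (h1 : ∑' k, a k = 1) :
    ∃ C : ℝ, 0 < C ∧ ∃ n0 : ℕ, ∀ n : ℕ, n0 ≤ n →
      ∫ y : ℝ, 1 / ‖(1 + y * I) + (n : ℂ)^2 * ∑' k, (a k : ℂ) / ((1 + y * I) + (b k : ℂ))‖^2 ≤ C := by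
  have hbk : ∀ k, 0 ≤ b k := fun k => le_trans hb0 (hb.monotone (Nat.zero_le k))
  obtain ⟨k0, hk0⟩ : ∃ k, 0 < a k := by
    by_contra h
    push_neg at h
    have hz : ∀ k, a k = 0 := fun k => le_antisymm (h k) (ha k)
    rw [tsum_congr hz, tsum_zero] at h1
    norm_num at h1
  have ha0le : a k0 ≤ 1 := by
    have h := Summable.le_tsum hsum k0 (fun j _ => ha j)
    linarith [h1 ▸ h]
  have hbk0 : 0 ≤ b k0 := hbk k0
  set γ : ℝ := a k0 ^ 2 / 16 with hγdef
  have hγ : 0 < γ := by positivity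
  refine ⟨3 * (Real.pi / γ), by positivity, ⌈2 * (1 + b k0)^2 / a k0⌉₊ + 1, fun n hn => ?_⟩
  -- basic size facts about n
  have hN1 : (1:ℝ) ≤ (n:ℝ) := by
    have : 1 ≤ n := le_trans (Nat.le_add_left 1 _) hn
    exact_mod_cast this
  have hNx : 2 * (1 + b k0)^2 / a k0 ≤ (n:ℝ) := by
    have h2' : ((⌈2 * (1 + b k0)^2 / a k0⌉₊ + 1 : ℕ) : ℝ) ≤ (n:ℝ) := Nat.cast_le.2 hn
    push_cast at h2'
    linarith [Nat.le_ceil (2 * (1 + b k0)^2 / a k0)]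
  have hNb : 2 * (1 + b k0)^2 ≤ a k0 * (n:ℝ)^2 := by
    rw [div_le_iff₀ hk0] at hNx
    nlinarith
  -- intermediate value: find y0 with (n)² Sf(y0²) = 1
  have hcont : Continuous fun y : ℝ => (n:ℝ)^2 * Sf a b (y^2) :=
    continuous_const.mul (Sf_cont ha hbk hsum)
  have hF0 : 1 < (n:ℝ)^2 * Sf a b ((0:ℝ)^2) := by
    have hb2 : (0:ℝ) < (1 + b k0)^2 := by positivity
    have hS0 : a k0 / ((1 + b k0)^2 + 0) ≤ Sf a b 0 := Sf_single ha hbk hsum k0 le_rfl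
    have hS0' : a k0 / (1 + b k0)^2 ≤ Sf a b 0 := by simpa using hS0
    rw [div_le_iff₀ hb2] at hS0'
    have h02 : ((0:ℝ))^2 = 0 := by norm_num
    rw [h02]
    nlinarith [Sf_nonneg ha hbk (le_refl (0:ℝ)), sq_nonneg (n:ℝ)]
  have hFN : (n:ℝ)^2 * Sf a b (((n:ℝ))^2) < 1 := by
    have hle := Sf_le ha hbk hsum h1 (u := ((n:ℝ))^2) (by positivity)
    have hpos : (0:ℝ) < 1 + (n:ℝ)^2 := by positivity
    have h2 : (n:ℝ)^2 * Sf a b (((n:ℝ))^2) ≤ (n:ℝ)^2 * (1/(1+(n:ℝ)^2)) := by nlinarith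
    have h3 : (n:ℝ)^2 * (1/(1+(n:ℝ)^2)) < 1 := by
      rw [mul_one_div, div_lt_one hpos]; linarith
    linarith
  have hIVT := intermediate_value_Icc' (by linarith : (0:ℝ) ≤ (n:ℝ)) hcont.continuousOn
  obtain ⟨y0, hy0mem, hFy0pre⟩ := hIVT ⟨le_of_lt hFN, le_of_lt hF0⟩
  obtain ⟨hy0a, hy0b⟩ := hy0mem
  have hFy0 : (n:ℝ)^2 * Sf a b (y0^2) = 1 := hFy0pre
  clear hFy0pre
  -- key numeric facts
  have hu0a : (0:ℝ) ≤ y0^2 := sq_nonneg _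
  have hD0pos : (0:ℝ) < (1 + b k0)^2 + y0^2 := by positivity
  have hND : a k0 * (n:ℝ)^2 ≤ (1 + b k0)^2 + y0^2 := by
    have hsingle : a k0 / ((1 + b k0)^2 + y0^2) ≤ Sf a b (y0^2) :=
      Sf_single ha hbk hsum k0 hu0a
    have h2 : (n:ℝ)^2 * (a k0 / ((1 + b k0)^2 + y0^2)) ≤ 1 := by
      have := mul_le_mul_of_nonneg_left hsingle (sq_nonneg (n:ℝ))
      linarith [hFy0]
    rw [mul_div_assoc', div_le_one hD0pos] at h2
    linarith
  have hu0l : a k0 * (n:ℝ)^2 / 2 ≤ y0^2 := by linarith [hND, hNb]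
  have hn2pos : (0:ℝ) < (n:ℝ)^2 := by nlinarith [hN1]
  have hu0pos : (0:ℝ) < y0^2 := by
    have := mul_pos hk0 hn2pos
    linarith [hu0l]
  have hy0pos : 0 < y0 := lt_of_le_of_ne hy0a (by
    intro h
    rw [← h] at hu0pos
    simp at hu0pos)
  have hu0N : y0^2 ≤ (n:ℝ)^2 := by nlinarith [hy0a, hy0b]
  have hD0le : (1 + b k0)^2 + y0^2 ≤ 2 * (n:ℝ)^2 := by nlinarith [hNb, ha0le, hn2pos, hu0N]
  -- 2γ ((1+b k0)^2+y0^2)^2 ≤ n^2 a k0 y0^2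
  have hγm : 2 * γ * ((1 + b k0)^2 + y0^2)^2 ≤ (n:ℝ)^2 * a k0 * y0^2 := by
    have hD2 : ((1 + b k0)^2 + y0^2)^2 ≤ 4 * (n:ℝ)^4 := by nlinarith
    have hh1 : a k0^2 * ((1 + b k0)^2 + y0^2)^2 ≤ a k0^2 * (4 * (n:ℝ)^4) :=
      mul_le_mul_of_nonneg_left hD2 (by positivity)
    have hh2 : ((n:ℝ)^2 * a k0) * (a k0 * (n:ℝ)^2 / 2) ≤ ((n:ℝ)^2 * a k0) * y0^2 :=
      mul_le_mul_of_nonneg_left hu0l (by nlinarith [sq_nonneg (n:ℝ)])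
    rw [hγdef]
    nlinarith [hh1, hh2]
  have claim : ∀ t : ℝ, 0 ≤ t →
      (1 + (t * (1 - (n:ℝ)^2 * Sf a b (t^2)))^2)⁻¹ ≤
      (1 + (γ * (t - y0))^2)⁻¹ + (1 + (γ * t)^2)⁻¹ :=
    fun t ht => claim_t ha hbk hsum hk0 hy0pos hγ hFy0 hγm ht
  -- pointwise bound on ℝ
  have hptwise : ∀ y : ℝ,
      1 / ‖(1 + y * I) + (n : ℂ)^2 * ∑' k, (a k : ℂ) / ((1 + y * I) + (b k : ℂ))‖^2
      ≤ (1 + (γ * (y - y0))^2)⁻¹ + (1 + (γ * (y + y0))^2)⁻¹ + (1 + (γ * y)^2)⁻¹ := by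
    intro y
    have habs := Gabs_sq ha hbk hsum n y
    have hpos0 : (0:ℝ) < 1 + (y * (1 - (n:ℝ)^2 * Sf a b (y^2)))^2 := by positivity
    have hstep1 : 1 / ‖(1 + y * I) + (n : ℂ)^2
          * ∑' k, (a k : ℂ) / ((1 + y * I) + (b k : ℂ))‖^2
        ≤ (1 + (y * (1 - (n:ℝ)^2 * Sf a b (y^2)))^2)⁻¹ := by
      rw [one_div]
      exact inv_anti₀ hpos0 habs
    have hclaim := claim |y| (abs_nonneg y)
    have heq1 : (|y| * (1 - (n:ℝ)^2 * Sf a b (|y|^2)))^2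
        = (y * (1 - (n:ℝ)^2 * Sf a b (y^2)))^2 := by
      rw [_root_.sq_abs, mul_pow, mul_pow, _root_.sq_abs]
    rw [heq1] at hclaim
    rcases le_or_gt 0 y with hy | hy
    · rw [_root_.abs_of_nonneg hy] at hclaim
      have hnn : (0:ℝ) ≤ (1 + (γ * (y + y0))^2)⁻¹ := by positivity
      linarith
    · rw [_root_.abs_of_neg hy] at hclaim
      have heq2 : (γ * (-y - y0))^2 = (γ * (y + y0))^2 := by ring
      have heq3 : (γ * (-y))^2 = (γ * y)^2 := by ring
      rw [heq2, heq3] at hclaim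
      have hnn : (0:ℝ) ≤ (1 + (γ * (y - y0))^2)⁻¹ := by positivity
      linarith
  -- integrate
  have hint1 := cauchyKernel_integrable hγ y0
  have hint2 : Integrable (fun y : ℝ => (1 + (γ * (y + y0))^2)⁻¹) := by
    have := cauchyKernel_integrable hγ (-y0)
    simpa [sub_neg_eq_add] using this
  have hint3 : Integrable (fun y : ℝ => (1 + (γ * y)^2)⁻¹) := by
    have := cauchyKernel_integrable hγ 0
    simpa using this
  have hint12 : Integrable (fun y : ℝ =>
      (1 + (γ * (y - y0))^2)⁻¹ + (1 + (γ * (y + y0))^2)⁻¹) := hint1.add hint2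
  have hgint : Integrable (fun y : ℝ =>
      (1 + (γ * (y - y0))^2)⁻¹ + (1 + (γ * (y + y0))^2)⁻¹ + (1 + (γ * y)^2)⁻¹) :=
    hint12.add hint3
  have hmono := integral_mono_of_nonneg
    (ae_of_all _ (fun y => by positivity :
      ∀ y : ℝ, (0:ℝ) ≤ 1 / ‖(1 + y * I) + (n : ℂ)^2
        * ∑' k, (a k : ℂ) / ((1 + y * I) + (b k : ℂ))‖^2))
    hgint (ae_of_all _ hptwise)
  have hval : ∫ y : ℝ, ((1 + (γ * (y - y0))^2)⁻¹ + (1 + (γ * (y + y0))^2)⁻¹ + (1 + (γ * y)^2)⁻¹)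
      = 3 * (Real.pi / γ) := by
    rw [integral_add hint12 hint3, integral_add hint1 hint2]
    have hv1 := cauchyKernel_integral hγ y0
    have hv2 : ∫ y : ℝ, (1 + (γ * (y + y0))^2)⁻¹ = Real.pi / γ := by
      have := cauchyKernel_integral hγ (-y0)
      simpa [sub_neg_eq_add] using this
    have hv3 : ∫ y : ℝ, (1 + (γ * y)^2)⁻¹ = Real.pi / γ := by
      have := cauchyKernel_integral hγ 0
      simpa using this
    rw [hv1, hv2, hv3]
    ring
  calc ∫ y : ℝ, 1 / ‖(1 + y * I) + (n : ℂ)^2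
        * ∑' k, (a k : ℂ) / ((1 + y * I) + (b k : ℂ))‖^2
      ≤ ∫ y : ℝ, ((1 + (γ * (y - y0))^2)⁻¹ + (1 + (γ * (y + y0))^2)⁻¹ + (1 + (γ * y)^2)⁻¹) :=
        hmono
    _ = 3 * (Real.pi / γ) := hval
end

section
/- Under conditions a_k ≥ 0, ∑ a_k = 1, and ∑ a_k b_k = β < ∞, for z in the sector |arg z| < π − δ and |z| → ∞ one has K(z) = 1/z − β/z^2 + o(1/z^2), where K(z) = ∑_k a_k/(z + b_k). -/
open Complex Filter Topology

lemma sector_lower {δ : ℝ} (hδ : 0 < δ) (hδπ : δ < Real.pi) {z : ℂ}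
    (hz : |Complex.arg z| < Real.pi - δ) (hz0 : z ≠ 0) {t : ℝ} (ht : 0 ≤ t) :
    Real.sin δ * ‖z‖ ≤ ‖z + t‖ ∧
      Real.sin δ * t ≤ ‖z + t‖ := by
  have hs : 0 < Real.sin δ := Real.sin_pos_of_pos_of_lt_pi hδ hδπ
  have habs : (0:ℝ) < ‖z‖ := by
    simpa [norm_pos_iff] using hz0
  have hre : -(‖z‖ * Real.cos δ) ≤ z.re := by
    have hcos : Real.cos (Real.pi - δ) ≤ Real.cos (Complex.arg z) := by
      rw [← Real.cos_abs (Complex.arg z)]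
      apply Real.cos_le_cos_of_nonneg_of_le_pi (abs_nonneg _)
      · linarith
      · linarith
    have h := Complex.cos_arg hz0
    rw [Real.cos_pi_sub] at hcos
    have : z.re = ‖z‖ * Real.cos (Complex.arg z) := by
      rw [h]; field_simp
    nlinarith
  have hsq : ‖z + t‖ ^ 2 = (z.re + t)^2 + z.im^2 := by
    rw [Complex.sq_norm, Complex.normSq_apply]
    simp [Complex.add_re, Complex.add_im]
    ring
  have hzsq : ‖z‖ ^ 2 = z.re^2 + z.im^2 := by
    rw [Complex.sq_norm, Complex.normSq_apply]; ring
  have hpyth : Real.sin δ ^ 2 + Real.cos δ ^ 2 = 1 := Real.sin_sq_add_cos_sq δ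
  have hmul : 0 ≤ t * (z.re + ‖z‖ * Real.cos δ) :=
    mul_nonneg ht (by linarith)
  have key1 : (Real.sin δ * ‖z‖)^2 ≤ ‖z + t‖ ^ 2 := by
    rw [hsq]
    nlinarith [sq_nonneg (‖z‖ * Real.cos δ - t)]
  have key2 : (Real.sin δ * t)^2 ≤ ‖z + t‖ ^ 2 := by
    rw [hsq]
    have e : (z.re + t)^2 + z.im^2 - (Real.sin δ * t)^2
        = (‖z‖ - t*Real.cos δ)^2 + 2*(t*(z.re + ‖z‖ * Real.cos δ))
          + (z.re^2 + z.im^2 - ‖z‖^2) + t^2*(1 - Real.sin δ^2 - Real.cos δ^2) := by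
      ring
    have e0 : t^2*(1 - Real.sin δ^2 - Real.cos δ^2) = 0 := by
      rw [show (1:ℝ) - Real.sin δ^2 - Real.cos δ^2 = 0 by linarith, mul_zero]
    linarith [sq_nonneg (‖z‖ - t*Real.cos δ)]
  constructor
  · have h1 := Real.sqrt_le_sqrt key1
    rwa [Real.sqrt_sq (by positivity), Real.sqrt_sq (norm_nonneg _)] at h1
  · have h1 := Real.sqrt_le_sqrt key2
    rwa [Real.sqrt_sq (by positivity), Real.sqrt_sq (norm_nonneg _)] at h1

set_option maxHeartbeats 1000000 in
theorem K_second_order_asymptotics (a b : ℕ → ℝ) (ha : ∀ k, 0 ≤ a k) (hb0 : 0 ≤ b 0)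
    (hb : StrictMono b) (hsum : Summable a) (h1 : ∑' k, a k = 1)
    (β : ℝ) (hsum1 : Summable (fun k => a k * b k)) (hβ : ∑' k, a k * b k = β)
    (δ : ℝ) (hδ : 0 < δ) :
    (fun z : ℂ => (∑' k, (a k : ℂ) / (z + (b k : ℂ))) - (1/z - (β : ℂ)/z^2))
      =o[Filter.comap (fun z : ℂ => ‖z‖) Filter.atTop ⊓ Filter.principal {z : ℂ | |Complex.arg z| < Real.pi - δ}]
      (fun z : ℂ => 1/z^2) := by
  by_cases hδπ : Real.pi ≤ δ
  · have hempty : {z : ℂ | |Complex.arg z| < Real.pi - δ} = ∅ := by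
      ext z
      simp only [Set.mem_setOf_eq, Set.mem_empty_iff_false, iff_false, not_lt]
      linarith [abs_nonneg (Complex.arg z)]
    rw [Asymptotics.isLittleO_iff]
    intro ε hε
    refine Filter.Eventually.filter_mono inf_le_right ?_
    refine Filter.eventually_principal.mpr fun z hz => ?_
    rw [hempty] at hz
    exact hz.elim
  push_neg at hδπ
  set s := Real.sin δ with hsdef
  have hs : 0 < s := Real.sin_pos_of_pos_of_lt_pi hδ hδπ
  have hbk : ∀ k, 0 ≤ b k := fun k => le_trans hb0 (hb.monotone (Nat.zero_le k))
  rw [Asymptotics.isLittleO_iff]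
  intro ε hε
  -- choose N for tail
  have htail : Tendsto (fun i => ∑' k, a (k+i) * b (k+i)) atTop (𝓝 0) :=
    tendsto_sum_nat_add (fun k => a k * b k)
  obtain ⟨N, hN⟩ := (htail.eventually_lt_const (show (0:ℝ) < s*ε/2 by positivity)).exists
  set C := ∑ k ∈ Finset.range N, a k * b k^2 with hCdef
  have hC : 0 ≤ C := Finset.sum_nonneg fun k _ => mul_nonneg (ha k) (sq_nonneg _)
  set R := max 1 ((2*C+1)/(s*ε)) with hRdef
  have hR1 : (1:ℝ) ≤ R := le_max_left _ _
  have hRC : 2*C+1 ≤ R*(s*ε) := by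
    have := le_max_right 1 ((2*C+1)/(s*ε))
    rw [div_le_iff₀ (by positivity)] at this
    linarith
  have hev1 : ∀ᶠ z : ℂ in Filter.comap (fun z : ℂ => ‖z‖) Filter.atTop ⊓
      Filter.principal {z : ℂ | |Complex.arg z| < Real.pi - δ}, R ≤ ‖z‖ := by
    exact (tendsto_comap.eventually (eventually_ge_atTop R)).filter_mono inf_le_left
  have hev2 : ∀ᶠ z : ℂ in Filter.comap (fun z : ℂ => ‖z‖) Filter.atTop ⊓
      Filter.principal {z : ℂ | |Complex.arg z| < Real.pi - δ},
      |Complex.arg z| < Real.pi - δ := by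
    refine Filter.Eventually.filter_mono inf_le_right ?_
    exact Filter.eventually_principal.mpr fun z hz => hz
  filter_upwards [hev1, hev2] with z hzR hzarg
  have hz1 : (1:ℝ) ≤ ‖z‖ := le_trans hR1 hzR
  have habs : (0:ℝ) < ‖z‖ := lt_of_lt_of_le one_pos hz1
  have hz0 : z ≠ 0 := by
    intro h; rw [h] at habs; simp at habs
  have hlow : ∀ t : ℝ, 0 ≤ t → s * ‖z‖ ≤ ‖z + t‖ ∧
      s * t ≤ ‖z + t‖ := fun t ht => sector_lower hδ hδπ hzarg hz0 ht
  have hzbne : ∀ k, z + (b k : ℂ) ≠ 0 := by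
    intro k h
    have h2 := (hlow (b k) (hbk k)).1
    rw [h] at h2
    simp only [norm_zero] at h2
    nlinarith
  -- summability of the three pieces
  have hF : Summable (fun k => (a k : ℂ)/(z + (b k : ℂ))) := by
    apply Summable.of_norm
    apply Summable.of_nonneg_of_le (fun k => norm_nonneg _) _ (hsum.div_const (s * ‖z‖))
    intro k
    rw [norm_div, Complex.norm_real, Real.norm_eq_abs, _root_.abs_of_nonneg (ha k)]
    gcongr
    · exact ha k
    · exact (hlow (b k) (hbk k)).1
  have hG : Summable (fun k => (a k : ℂ)/z) := (Complex.summable_ofReal.mpr hsum).div_const z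
  have hH : Summable (fun k => ((a k * b k : ℝ) : ℂ)/z^2) :=
    (Complex.summable_ofReal.mpr hsum1).div_const (z^2)
  set D : ℕ → ℂ := fun k => (a k : ℂ)/(z + (b k : ℂ)) - (a k : ℂ)/z + ((a k * b k : ℝ) : ℂ)/z^2
    with hDdef
  have hD : Summable D := (hF.sub hG).add hH
  -- the function value equals the tsum of D
  have htsumG : ∑' k, (a k : ℂ)/z = 1/z := by
    rw [tsum_div_const, ← Complex.ofReal_tsum, h1, Complex.ofReal_one]
  have htsumH : ∑' k, ((a k * b k : ℝ) : ℂ)/z^2 = (β : ℂ)/z^2 := by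
    rw [tsum_div_const, ← Complex.ofReal_tsum, hβ]
  have hfz : (∑' k, (a k : ℂ) / (z + (b k : ℂ))) - (1/z - (β : ℂ)/z^2) = ∑' k, D k := by
    rw [hDdef, (hF.sub hG).tsum_add hH, hF.tsum_sub hG, htsumG, htsumH]
    ring
  -- closed form for D
  have hDk : ∀ k, D k = ((a k * b k^2 : ℝ) : ℂ)/(z^2 * (z + (b k : ℂ))) := by
    intro k
    have h2 := hzbne k
    rw [hDdef]
    push_cast
    field_simp
    ring
  have hnorm : ∀ k, ‖D k‖ = (a k * b k^2) / ((‖z‖)^2 * ‖z + (b k : ℂ)‖) := by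
    intro k
    rw [hDk k, norm_div, Complex.norm_real, Real.norm_eq_abs,
      _root_.abs_of_nonneg (mul_nonneg (ha k) (sq_nonneg _)),
      norm_mul, norm_pow]
  have habk : ∀ k, 0 < ‖z + (b k : ℂ)‖ := by
    intro k
    simpa [norm_pos_iff] using hzbne k
  have bound_tail : ∀ k, ‖D k‖ ≤ (a k * b k) / (s * (‖z‖)^2) := by
    intro k
    rw [hnorm k, div_le_div_iff₀ (mul_pos (by positivity) (habk k)) (by positivity)]
    have h2 : s * b k ≤ ‖z + (b k : ℂ)‖ := (hlow (b k) (hbk k)).2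
    nlinarith [mul_nonneg (mul_nonneg (mul_nonneg (ha k) (hbk k)) (sq_nonneg (‖z‖)))
      (sub_nonneg.mpr h2)]
  have bound_head : ∀ k, ‖D k‖ ≤ (a k * b k^2) / (s * (‖z‖)^3) := by
    intro k
    rw [hnorm k, div_le_div_iff₀ (mul_pos (by positivity) (habk k)) (by positivity)]
    have h2 : s * ‖z‖ ≤ ‖z + (b k : ℂ)‖ := (hlow (b k) (hbk k)).1
    nlinarith [mul_nonneg (mul_nonneg (mul_nonneg (ha k) (sq_nonneg (b k)))
      (sq_nonneg (‖z‖))) (sub_nonneg.mpr h2)]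
  have hSu : Summable (fun k => ‖D k‖) :=
    Summable.of_nonneg_of_le (fun k => norm_nonneg _) bound_tail
      (hsum1.div_const (s * (‖z‖)^2))
  have hsplit := Summable.sum_add_tsum_nat_add (f := fun k => ‖D k‖) N hSu
  have hhead : ∑ i ∈ Finset.range N, ‖D i‖ ≤ C / (s * (‖z‖)^3) := by
    rw [hCdef, Finset.sum_div]
    exact Finset.sum_le_sum fun i _ => bound_head i
  have htail2 : ∑' i, ‖D (i + N)‖ ≤ (∑' i, a (i+N) * b (i+N)) / (s * (‖z‖)^2) := by
    rw [div_eq_mul_inv, ← tsum_mul_right]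
    refine Summable.tsum_le_tsum (fun i => ?_) ((summable_nat_add_iff N).mpr hSu)
      (((summable_nat_add_iff N).mpr hsum1).mul_right _)
    rw [← div_eq_mul_inv]
    exact bound_tail (i + N)
  set T := ∑' i, a (i+N) * b (i+N) with hTdef
  have hT0 : 0 ≤ T := tsum_nonneg fun i => mul_nonneg (ha _) (hbk _)
  set A := ‖z‖ with hAdef
  have hAR : R ≤ A := hzR
  have half1 : C / (s * A^3) ≤ ε/2 / A^2 := by
    rw [div_le_div_iff₀ (by positivity) (by positivity)]
    have hA' : 2*C+1 ≤ A*(s*ε) := le_trans hRC (by nlinarith)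
    nlinarith [mul_le_mul_of_nonneg_right hA' (sq_nonneg A), sq_nonneg A]
  have half2 : T / (s * A^2) ≤ ε/2 / A^2 := by
    rw [div_le_div_iff₀ (by positivity) (by positivity)]
    nlinarith [mul_le_mul_of_nonneg_right (le_of_lt hN) (sq_nonneg A), sq_nonneg A]
  have hnorm2 : ‖(1:ℂ)/z^2‖ = 1/A^2 := by
    rw [norm_div, norm_one, norm_pow]
  calc ‖(∑' k, (a k : ℂ) / (z + (b k : ℂ))) - (1/z - (β : ℂ)/z^2)‖
      = ‖∑' k, D k‖ := by rw [hfz]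
    _ ≤ ∑' k, ‖D k‖ := norm_tsum_le_tsum_norm hSu
    _ = (∑ i ∈ Finset.range N, ‖D i‖) + ∑' i, ‖D (i + N)‖ := hsplit.symm
    _ ≤ C / (s * A^3) + T / (s * A^2) := add_le_add hhead htail2
    _ ≤ ε/2 / A^2 + ε/2 / A^2 := add_le_add half1 half2
    _ = ε * (1/A^2) := by ring
    _ = ε * ‖(1:ℂ)/z^2‖ := by rw [hnorm2]
end
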